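/- arXiv:1601.00572 — 5 statements merged into one kernel-verified Lean document; each statement's English description precedes it below -/
import Mathlib

section
/- Let k ≥ 3. In ℤ[x,y], let H₁ = (∑_{i=0}^{2k-2} yⁱ) + x. Then H₁ + (∑_{j=1}^{k-2} j·y^{2k-3-2j})·(1 + y - y² - y³) = 1 + x + (k-1)·(y + y²). -/
open MvPolynomial

private abbrev Rpoly := MvPolynomial (Fin 2) ℤ

private lemma tel (n : ℕ) :
    (∑ t ∈ Finset.range n, (X 1 : Rpoly) ^ (2 * t + 1)) * (1 + X 1 - X 1 ^ 2 - X 1 ^ 3) =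
      X 1 + X 1 ^ 2 - X 1 ^ (2 * n + 1) - X 1 ^ (2 * n + 2) := by
  induction n with
  | zero => simp
  | succ n ih =>
    rw [Finset.sum_range_succ, add_mul, ih]
    have h1 : 2 * (n + 1) + 1 = (2 * n + 1) + 2 := by ring
    have h2 : 2 * (n + 1) + 2 = (2 * n + 1) + 3 := by ring
    have h3 : 2 * n + 2 = (2 * n + 1) + 1 := by ring
    rw [h1, h2, h3, pow_add, pow_add, pow_add]
    ring

private lemma auxA (m : ℕ) :
    (∑ i ∈ Finset.range (2 * m + 5), (X 1 : Rpoly) ^ i) +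
      (∑ t ∈ Finset.range (m + 1), ((m : Rpoly) - (t : Rpoly) + 1) * X 1 ^ (2 * t + 1)) *
        (1 + X 1 - X 1 ^ 2 - X 1 ^ 3) =
      1 + ((m : Rpoly) + 2) * (X 1 + X 1 ^ 2) := by
  induction m with
  | zero =>
    norm_num [Finset.sum_range_succ]
    ring
  | succ m ih =>
    have hS : (∑ t ∈ Finset.range (m + 1 + 1),
          (((m + 1 : ℕ) : Rpoly) - (t : Rpoly) + 1) * X 1 ^ (2 * t + 1))
        = (∑ t ∈ Finset.range (m + 1), ((m : Rpoly) - (t : Rpoly) + 1) * X 1 ^ (2 * t + 1))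
          + ∑ t ∈ Finset.range (m + 2), (X 1 : Rpoly) ^ (2 * t + 1) := by
      have key : (∑ t ∈ Finset.range (m + 1 + 1),
            (((m + 1 : ℕ) : Rpoly) - (t : Rpoly) + 1) * X 1 ^ (2 * t + 1))
          = (∑ t ∈ Finset.range (m + 1 + 1),
              ((m : Rpoly) - (t : Rpoly) + 1) * X 1 ^ (2 * t + 1))
            + ∑ t ∈ Finset.range (m + 2), (X 1 : Rpoly) ^ (2 * t + 1) := by
        rw [← Finset.sum_add_distrib]
        apply Finset.sum_congr rfl
        intro t _
        push_cast
        ring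
      rw [key, Finset.sum_range_succ ((fun t => ((m : Rpoly) - (t : Rpoly) + 1) * X 1 ^ (2 * t + 1)))]
      push_cast
      ring
    have hrange : 2 * (m + 1) + 5 = (2 * m + 5) + 1 + 1 := by ring
    rw [hrange, Finset.sum_range_succ, Finset.sum_range_succ, hS, add_mul, tel (m + 2)]
    have e1 : 2 * (m + 2) + 1 = 2 * m + 5 := by ring
    have e2 : 2 * (m + 2) + 2 = 2 * m + 5 + 1 := by ring
    rw [e1, e2]
    rw [show (∑ i ∈ Finset.range (2*m+5), (X 1 : Rpoly) ^ i) + X 1 ^ (2*m+5) + X 1 ^ (2*m+5+1)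
        + ((∑ t ∈ Finset.range (m+1), ((m : Rpoly) - (t : Rpoly) + 1) * X 1 ^ (2*t+1)) * (1 + X 1 - X 1^2 - X 1^3)
          + (X 1 + X 1^2 - X 1 ^ (2*m+5) - X 1 ^ (2*m+5+1)))
        = ((∑ i ∈ Finset.range (2*m+5), (X 1 : Rpoly) ^ i)
          + (∑ t ∈ Finset.range (m+1), ((m : Rpoly) - (t : Rpoly) + 1) * X 1 ^ (2*t+1)) * (1 + X 1 - X 1^2 - X 1^3))
          + (X 1 + X 1^2) from by ring, ih]
    push_cast
    ring

theorem stmt_11 (k : ℕ) (hk : 3 ≤ k) :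
    let x : MvPolynomial (Fin 2) ℤ := X 0
    let y : MvPolynomial (Fin 2) ℤ := X 1
    let H₁ := (∑ i ∈ Finset.range (2 * k - 1), y ^ i) + x
    H₁ + (∑ j ∈ Finset.Icc 1 (k - 2), (j : MvPolynomial (Fin 2) ℤ) * y ^ (2 * k - 3 - 2 * j)) *
        (1 + y - y ^ 2 - y ^ 3) =
      1 + x + ((k : MvPolynomial (Fin 2) ℤ) - 1) * (y + y ^ 2) := by
  intro x y H₁
  obtain ⟨m, rfl⟩ : ∃ m, k = m + 3 := ⟨k - 3, by omega⟩
  have hIcc : (∑ j ∈ Finset.Icc 1 (m + 3 - 2), (j : Rpoly) * y ^ (2 * (m + 3) - 3 - 2 * j))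
      = ∑ t ∈ Finset.range (m + 1), ((m : Rpoly) - (t : Rpoly) + 1) * y ^ (2 * t + 1) := by
    have h1 : (∑ j ∈ Finset.Icc 1 (m + 1), (j : Rpoly) * y ^ (2 * (m + 3) - 3 - 2 * j))
        = ∑ i ∈ Finset.range (m + 1), ((i + 1 : ℕ) : Rpoly) * y ^ (2 * m + 1 - 2 * i) := by
      rw [show Finset.Icc 1 (m + 1) = Finset.Ico 1 (m + 2) by exact (Finset.Ico_add_one_right_eq_Icc (a := 1) (b := m + 1)).symm,
        Finset.sum_Ico_eq_sum_range]
      apply Finset.sum_congr (by congr 1)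
      intro i hi
      simp only [Finset.mem_range] at hi
      congr 1
      · push_cast; ring
      · congr 1; omega
    have h2 : (∑ i ∈ Finset.range (m + 1), ((i + 1 : ℕ) : Rpoly) * y ^ (2 * m + 1 - 2 * i))
        = ∑ t ∈ Finset.range (m + 1), ((m : Rpoly) - (t : Rpoly) + 1) * y ^ (2 * t + 1) := by
      rw [← Finset.sum_range_reflect]
      apply Finset.sum_congr rfl
      intro t ht
      simp only [Finset.mem_range] at ht
      have ht' : t ≤ m := by omega
      have hmt : (m + 1 - 1 - t) = m - t := by omega
      rw [hmt]
      congr 1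
      · push_cast [Nat.cast_sub ht']
        ring
      · congr 1; omega
    rw [show m + 3 - 2 = m + 1 from rfl, h1, h2]
  have hr : 2 * (m + 3) - 1 = 2 * m + 5 := by omega
  show (∑ i ∈ Finset.range (2 * (m + 3) - 1), y ^ i) + x
      + (∑ j ∈ Finset.Icc 1 (m + 3 - 2), (j : Rpoly) * y ^ (2 * (m + 3) - 3 - 2 * j)) *
        (1 + y - y ^ 2 - y ^ 3)
      = 1 + x + (((m + 3 : ℕ) : Rpoly) - 1) * (y + y ^ 2)
  rw [hr, hIcc]
  have h := auxA m
  push_cast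
  push_cast at h
  linear_combination h
end

section
/- Let k ≥ 3 and n = 2k. The set of common complex zeros of the four polynomials H₁ = (∑_{i=0}^{n-2} yⁱ) + x, H₂ = y^{n-2} + x·∑_{i=0}^{n-2} yⁱ, H₃ = y + ∑_{i=0}^{n-2} xⁱ, H₄ = y·∑_{i=0}^{n-2} xⁱ + x^{n-2} is exactly the set of pairs (ε, ε^{n-1}) where ε ∈ ℂ satisfies εⁿ = 1 and ε ≠ 1. -/
theorem stmt_15 (k : ℕ) (hk : 3 ≤ k) (n : ℕ) (hn : n = 2 * k) (x y : ℂ) :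
    ((∑ i ∈ Finset.range (n - 1), y ^ i) + x = 0 ∧
     y ^ (n - 2) + x * ∑ i ∈ Finset.range (n - 1), y ^ i = 0 ∧
     y + ∑ i ∈ Finset.range (n - 1), x ^ i = 0 ∧
     y * (∑ i ∈ Finset.range (n - 1), x ^ i) + x ^ (n - 2) = 0) ↔
    (x ^ n = 1 ∧ x ≠ 1 ∧ y = x ^ (n - 1)) := by
  obtain ⟨j, rfl⟩ : ∃ j, k = j + 3 := ⟨k - 3, by omega⟩
  subst hn
  rw [show 2*(j+3) - 1 = 2*j+5 by omega, show 2*(j+3) - 2 = 2*j+4 by omega,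
      show 2*(j+3) = 2*j+6 by omega]
  have gS : (∑ i ∈ Finset.range (2*j+5), y ^ i) * (y - 1) = y ^ (2*j+5) - 1 :=
    geom_sum_mul y (2*j+5)
  have gT : (∑ i ∈ Finset.range (2*j+5), x ^ i) * (x - 1) = x ^ (2*j+5) - 1 :=
    geom_sum_mul x (2*j+5)
  constructor
  · rintro ⟨h1, h2, h3, h4⟩
    have hym : y ^ (2*j+4) = x ^ 2 := by linear_combination h2 - x*h1
    have hxm : x ^ (2*j+4) = y ^ 2 := by linear_combination h4 - y*h3
    have factA : (x + 1) * (x*y - 1) = 0 := by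
      linear_combination (x*y + y - 1)*h1 - y*h2 - gS
    have factB : (y + 1) * (x*y - 1) = 0 := by
      linear_combination (x*y + x - 1)*h3 - x*h4 - gT
    rcases mul_eq_zero.mp factA with hx | hxy
    · -- x = -1
      have hx' : x = -1 := by linear_combination hx
      have hy' : y = -1 := by
        rcases mul_eq_zero.mp factB with hy | hxy2
        · linear_combination hy
        · linear_combination -hxy2 + y*hx
      refine ⟨?_, ?_, ?_⟩
      · rw [hx', show 2*j+6 = 2*(j+3) by ring, pow_mul]; norm_num
      · rw [hx']; norm_num
      · rw [hx', hy', show 2*j+5 = 2*(j+2)+1 by ring, pow_succ, pow_mul]; norm_num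
    · -- x*y = 1
      have hxy' : x*y = 1 := by linear_combination hxy
      refine ⟨?_, ?_, ?_⟩
      · linear_combination x^2*hxm + (x*y+1)*hxy'
      · intro h
        have hy1 : y = 1 := by rw [h, one_mul] at hxy'; exact hxy'
        rw [h, hy1] at h1
        simp only [one_pow, Finset.sum_const, Finset.card_range, nsmul_eq_mul, mul_one] at h1
        have h0 : ((2*j+6 : ℕ) : ℂ) = 0 := by push_cast at h1 ⊢; linear_combination h1
        exact absurd (Nat.cast_eq_zero.mp h0) (by omega)
      · linear_combination -x*hxm - y*hxy'
  · rintro ⟨hxn, hx1, hy⟩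
    have hxy : x * y = 1 := by
      rw [hy, show x * x^(2*j+5) = x^(2*j+6) by ring]; exact hxn
    have hy1 : y ≠ 1 := by
      intro h; apply hx1; rw [h, mul_one] at hxy; exact hxy
    have hym : y ^ (2*j+4) = x ^ 2 := by
      rw [hy, ← pow_mul, show (2*j+5)*(2*j+4) = (2*j+6)*(2*j+3)+2 by ring,
          pow_add, pow_mul, hxn, one_pow, one_mul]
    have hxm : x ^ (2*j+4) = y ^ 2 := by
      rw [hy, ← pow_mul, show (2*j+5)*2 = (2*j+6)+(2*j+4) by ring]
      conv_rhs => rw [pow_add, hxn, one_mul]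
    have hyn1 : y ^ (2*j+5) = x := by
      rw [hy, ← pow_mul, show (2*j+5)*(2*j+5) = (2*j+6)*(2*j+4)+1 by ring,
          pow_add, pow_mul, hxn, one_pow, one_mul, pow_one]
    have hxn1 : x ^ (2*j+5) = y := by linear_combination x*hxm + y*hxy
    have h1 : (∑ i ∈ Finset.range (2*j+5), y ^ i) + x = 0 := by
      have key : ((∑ i ∈ Finset.range (2*j+5), y ^ i) + x) * (y - 1) = 0 := by
        linear_combination gS + hyn1 + hxy
      exact (mul_eq_zero.mp key).resolve_right (sub_ne_zero.mpr hy1)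
    have h3 : y + (∑ i ∈ Finset.range (2*j+5), x ^ i) = 0 := by
      have key : (y + (∑ i ∈ Finset.range (2*j+5), x ^ i)) * (x - 1) = 0 := by
        linear_combination gT + hxn1 + hxy
      exact (mul_eq_zero.mp key).resolve_right (sub_ne_zero.mpr hx1)
    exact ⟨h1, by linear_combination hym + x*h1, h3, by linear_combination y*h3 + hxm⟩
end

section
/- Let n ≥ 2 and p, q ≥ 1 be integers. The polynomial f(x,y) = (∑_{i=0}^{q-1} xⁱ)·(∑_{j=0}^{p-1} yʲ) vanishes at every point (ε, ε^{-1}) with ε ∈ ℂ, εⁿ = 1, ε ≠ 1, if and only if n divides p or n divides q. -/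
theorem stmt_16 (n p q : ℕ) (hn : 2 ≤ n) (hp : 1 ≤ p) (hq : 1 ≤ q) :
    (∀ ε : ℂ, ε ^ n = 1 → ε ≠ 1 →
        (∑ i ∈ Finset.range q, ε ^ i) * (∑ j ∈ Finset.range p, (ε⁻¹) ^ j) = 0) ↔
    (n ∣ p ∨ n ∣ q) := by
  have hn0 : n ≠ 0 := by omega
  constructor
  · intro h
    have hprim := Complex.isPrimitiveRoot_exp n hn0
    set ε := Complex.exp (2 * Real.pi * Complex.I / n) with hεdef
    have hεn : ε ^ n = 1 := hprim.pow_eq_one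
    have hε1 : ε ≠ 1 := hprim.ne_one (by omega)
    have hmul := h ε hεn hε1
    rcases mul_eq_zero.1 hmul with h1 | h2
    · right
      rw [geom_sum_eq hε1, div_eq_zero_iff, sub_eq_zero, sub_eq_zero] at h1
      rcases h1 with h1 | h1
      · exact (hprim.pow_eq_one_iff_dvd q).1 h1
      · exact absurd h1 hε1
    · left
      have hinv : IsPrimitiveRoot ε⁻¹ n := hprim.inv
      have hinv1 : ε⁻¹ ≠ 1 := hinv.ne_one (by omega)
      rw [geom_sum_eq hinv1, div_eq_zero_iff, sub_eq_zero, sub_eq_zero] at h2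
      rcases h2 with h2 | h2
      · exact (hinv.pow_eq_one_iff_dvd p).1 h2
      · exact absurd h2 hinv1
  · rintro (⟨k, rfl⟩ | ⟨k, rfl⟩) ε hεn hε1
    · have hinv1 : ε⁻¹ ≠ 1 := by
        simpa [inv_eq_one] using hε1
      have hpow : (ε⁻¹) ^ (n * k) = 1 := by
        rw [inv_pow, pow_mul, hεn, one_pow, inv_one]
      rw [geom_sum_eq hinv1, hpow, sub_self, zero_div, mul_zero]
    · have hpow : ε ^ (n * k) = 1 := by
        rw [pow_mul, hεn, one_pow]
      rw [geom_sum_eq hε1, hpow, sub_self, zero_div, zero_mul]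
end

section
/- Let n ≥ 2 and p, q ≥ 1 be integers. In ℤ[y], the polynomial ∑_{i=0}^{n-1} yⁱ divides the product (∑_{i=0}^{p-1} yⁱ)·(∑_{j=0}^{q-1} yʲ) if and only if n divides p or n divides q. -/
open Polynomial

lemma geom_dvd_X_pow_sub_one (m : ℕ) :
    (∑ i ∈ Finset.range m, (X : ℤ[X]) ^ i) ∣ X ^ m - 1 :=
  ⟨X - 1, (geom_sum_mul X m).symm⟩

lemma cyclotomic_dvd_imp (n m : ℕ) (hn : 0 < n)
    (h : cyclotomic n ℤ ∣ (X : ℤ[X]) ^ m - 1) : n ∣ m := by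
  have hprim := Complex.isPrimitiveRoot_exp n hn.ne'
  set ζ := Complex.exp (2 * Real.pi * Complex.I / n)
  have hmap : cyclotomic n ℂ ∣ (X : ℂ[X]) ^ m - 1 := by
    have := Polynomial.map_dvd (Int.castRingHom ℂ) h
    simpa [Polynomial.map_cyclotomic] using this
  have hroot : ((X : ℂ[X]) ^ m - 1).IsRoot ζ := by
    obtain ⟨g, hg⟩ := hmap
    have : IsRoot (cyclotomic n ℂ) ζ := hprim.isRoot_cyclotomic hn
    simp [hg, IsRoot, eval_mul, this.eq_zero]
  have : ζ ^ m = 1 := by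
    have := hroot
    simp [IsRoot] at this
    linear_combination this
  exact (hprim.pow_eq_one_iff_dvd m).mp this

lemma geom_dvd_geom {n m : ℕ} (h : n ∣ m) :
    (∑ i ∈ Finset.range n, (X : ℤ[X]) ^ i) ∣ ∑ i ∈ Finset.range m, (X : ℤ[X]) ^ i := by
  obtain ⟨k, rfl⟩ := h
  have hX : ((X : ℤ[X]) - 1) ≠ 0 := by
    have := X_sub_C_ne_zero (R := ℤ) 1
    simpa using this
  have key : ((X : ℤ[X]) ^ n - 1) ∣ (X ^ (n * k) - 1) := by
    have := sub_dvd_pow_sub_pow ((X : ℤ[X]) ^ n) 1 k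
    simpa [← pow_mul, one_pow] using this
  rw [← mul_dvd_mul_iff_right hX, geom_sum_mul, geom_sum_mul]
  exact key

theorem stmt_17 (n p q : ℕ) (hn : 2 ≤ n) (hp : 1 ≤ p) (hq : 1 ≤ q) :
    (∑ i ∈ Finset.range n, (X : ℤ[X]) ^ i) ∣
        (∑ i ∈ Finset.range p, (X : ℤ[X]) ^ i) * (∑ j ∈ Finset.range q, (X : ℤ[X]) ^ j) ↔
    (n ∣ p ∨ n ∣ q) := by
  have hn0 : 0 < n := by omega
  constructor
  · intro h
    have hcyc : cyclotomic n ℤ ∣ ∑ i ∈ Finset.range n, (X : ℤ[X]) ^ i :=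
      cyclotomic_dvd_geom_sum_of_dvd ℤ dvd_rfl (by omega)
    have hprime : Prime (cyclotomic n ℤ) :=
      (cyclotomic.irreducible hn0).prime
    rcases hprime.dvd_or_dvd (hcyc.trans h) with h1 | h1
    · exact Or.inl (cyclotomic_dvd_imp n p hn0 (h1.trans (geom_dvd_X_pow_sub_one p)))
    · exact Or.inr (cyclotomic_dvd_imp n q hn0 (h1.trans (geom_dvd_X_pow_sub_one q)))
  · rintro (h | h)
    · exact (geom_dvd_geom h).trans (dvd_mul_right _ _)
    · exact (geom_dvd_geom h).trans (dvd_mul_left _ _)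
end

section
/- Let p, q ≥ 1 and let P(y) = (∑_{i=0}^{p-1} yⁱ)·(∑_{j=0}^{q-1} yʲ) ∈ ℤ[y]. Then the value of the derivative P′ at y = -1 equals: p/2 if p is even and q is odd; q/2 if p is odd and q is even; and 0 if both p and q are even. -/
open Polynomial

lemma evalA (n : ℕ) : ((∑ i ∈ Finset.range n, X ^ i : ℤ[X])).eval (-1)
    = if Even n then 0 else 1 := by
  induction n with
  | zero => simp
  | succ n ih =>
    rw [Finset.sum_range_succ]
    simp only [eval_add, eval_pow, eval_X, ih, Nat.even_add_one]
    by_cases h : Even n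
    · simp [h, h.neg_one_pow]
    · simp [h, (Nat.not_even_iff_odd.mp h).neg_one_pow]

lemma evalD (n : ℕ) : 2 * (derivative (∑ i ∈ Finset.range n, X ^ i : ℤ[X])).eval (-1)
    = if Even n then (n : ℤ) else 1 - n := by
  induction n with
  | zero => simp
  | succ n ih =>
    rw [Finset.sum_range_succ, derivative_add, eval_add, derivative_X_pow, mul_add, ih]
    simp only [eval_mul, eval_pow, eval_X, eval_natCast, Nat.even_add_one]
    by_cases h : Even n
    · rcases Nat.eq_zero_or_pos n with h0 | h0
      · simp [h0]
      · have : (-1 : ℤ) ^ (n - 1) = -1 := by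
          exact Odd.neg_one_pow (Nat.Even.sub_odd h0 h odd_one)
        simp [h, this]; push_cast; ring
    · have hn : Odd n := Nat.not_even_iff_odd.mp h
      have : (-1 : ℤ) ^ (n - 1) = 1 := by
        have : Even (n - 1) := Nat.Odd.sub_odd hn odd_one
        exact this.neg_one_pow
      simp [h, this]; push_cast; ring

theorem stmt_18 (p q : ℕ) (hp : 1 ≤ p) (hq : 1 ≤ q) :
    let P : ℤ[X] := (∑ i ∈ Finset.range p, X ^ i) * (∑ j ∈ Finset.range q, X ^ j)
    (Even p → Odd q → (derivative P).eval (-1) = (p : ℤ) / 2) ∧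
    (Odd p → Even q → (derivative P).eval (-1) = (q : ℤ) / 2) ∧
    (Even p → Even q → (derivative P).eval (-1) = 0) := by
  intro P
  have hd : (derivative P).eval (-1)
      = (derivative (∑ i ∈ Finset.range p, X ^ i : ℤ[X])).eval (-1)
        * ((∑ j ∈ Finset.range q, X ^ j : ℤ[X])).eval (-1)
      + ((∑ i ∈ Finset.range p, X ^ i : ℤ[X])).eval (-1)
        * (derivative (∑ j ∈ Finset.range q, X ^ j : ℤ[X])).eval (-1) := by
    simp [P, derivative_mul]
  have hap := evalA p
  have haq := evalA q
  have hdp := evalD p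
  have hdq := evalD q
  refine ⟨?_, ?_, ?_⟩
  · intro hep hoq
    rw [if_pos hep] at hap hdp
    rw [if_neg (Nat.not_even_iff_odd.mpr hoq)] at haq
    rw [hd, hap, haq]
    omega
  · intro hop heq
    rw [if_neg (Nat.not_even_iff_odd.mpr hop)] at hap
    rw [if_pos heq] at haq hdq
    rw [hd, hap, haq]
    omega
  · intro hep heq
    rw [if_pos hep] at hap
    rw [if_pos heq] at haq
    rw [hd, hap, haq]
    ring
end
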